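/- Let F: [0,∞) → [0,∞) be a strictly increasing continuous convex function with F(0) = 0 satisfying the Δ₂-condition. Write F_t(x) = F(tx)/F(t). If there exists a constant C > 1 such that for all 0 < x ≤ 1, limsup_{t→∞} F_t(x) ≤ C · liminf_{t→∞} F_t(x), then for every x₀ ∈ (0,1] there exist a constant C' (depending only on C and the Δ₂ constant) and t₀ < ∞ such that for all t ≥ t₀ and x₀ ≤ x ≤ 1, C'⁻¹ x^p ≤ F_t(x) ≤ C' x^p for some fixed 1 ≤ p < ∞. -/

import Mathlib

open Filter Function Set

lemma le_of_forall_pos_le_add' {a b : ℝ} (h : ∀ ε > (0:ℝ), a ≤ b + ε) : a ≤ b := by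
  by_contra hc
  push_neg at hc
  have := h ((a - b) / 2) (by linarith)
  linarith


/-- Fekete-type bound for almost-additive superadditive sequences. -/
lemma fekete_bound (h : ℕ → ℝ) (D B : ℝ) (hD : 0 ≤ D) (h0 : h 0 = 0)
    (hsuper : ∀ m n, h m + h n ≤ h (m + n))
    (hsub : ∀ m n, h (m + n) ≤ h m + h n + D)
    (hub : ∀ n : ℕ, h n ≤ n * B) :
    ∃ lam : ℝ, h 1 ≤ lam ∧ (∀ n : ℕ, h n ≤ lam * n) ∧ (∀ n : ℕ, lam * n - D ≤ h n) := by
  have hiter_lo : ∀ k n : ℕ, (k : ℝ) * h n ≤ h (k * n) := by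
    intro k n
    induction k with
    | zero => simp [h0]
    | succ k ih =>
      have := hsuper (k * n) n
      push_cast
      calc ((k : ℝ) + 1) * h n = (k : ℝ) * h n + h n := by ring
        _ ≤ h (k * n) + h n := by linarith
        _ ≤ h (k * n + n) := this
        _ = h ((k + 1) * n) := by ring_nf
  have hiter_hi : ∀ k n : ℕ, h (k * n) ≤ (k : ℝ) * (h n + D) := by
    intro k n
    induction k with
    | zero => simp [h0]
    | succ k ih =>
      have := hsub (k * n) n
      push_cast
      calc h ((k + 1) * n) = h (k * n + n) := by ring_nf
        _ ≤ h (k * n) + h n + D := this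
        _ ≤ (k : ℝ) * (h n + D) + h n + D := by linarith
        _ = ((k : ℝ) + 1) * (h n + D) := by ring
  set S : Set ℝ := Set.range (fun n : ℕ => h (n + 1) / (n + 1)) with hS
  have hne : S.Nonempty := ⟨h 1 / 1, ⟨0, by norm_num⟩⟩
  have hbdd : BddAbove S := by
    refine ⟨B, ?_⟩
    rintro r ⟨n, rfl⟩
    have hpos : (0 : ℝ) < (n : ℝ) + 1 := by positivity
    rw [div_le_iff₀ hpos]
    have := hub (n + 1)
    push_cast at this ⊢
    linarith
  refine ⟨sSup S, ?_, ?_, ?_⟩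
  · have : h 1 / 1 ∈ S := ⟨0, by norm_num⟩
    simpa using le_csSup hbdd this
  · intro n
    match n with
    | 0 => simp [h0]
    | Nat.succ m =>
      have hmem : h (m + 1) / (m + 1) ∈ S := ⟨m, rfl⟩
      have := le_csSup hbdd hmem
      have hpos : (0 : ℝ) < (m : ℝ) + 1 := by positivity
      rw [div_le_iff₀ hpos] at this
      push_cast
      linarith
  · intro n
    match n with
    | 0 => simp [h0, hD]
    | Nat.succ m =>
      set n := m + 1 with hn
      have hpos : (0 : ℝ) < (n : ℝ) := by positivity
      have hsup_le : sSup S ≤ (h n + D) / n := by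
        apply csSup_le hne
        rintro r ⟨k, rfl⟩
        have hkpos : (0 : ℝ) < (k : ℝ) + 1 := by positivity
        rw [div_le_div_iff₀ hkpos hpos]
        have h1 : (n : ℝ) * h (k + 1) ≤ h (n * (k + 1)) := hiter_lo n (k + 1)
        have h2 : h ((k + 1) * n) ≤ ((k : ℝ) + 1) * (h n + D) := by
          have := hiter_hi (k + 1) n
          push_cast at this
          linarith
        rw [mul_comm n (k + 1)] at h1
        push_cast at h1
        have hcast : (n : ℝ) = (m : ℝ) + 1 := by simp [hn]
        rw [hcast] at h1 ⊢
        nlinarith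
      rw [le_div_iff₀ hpos] at hsup_le
      linarith


/-- `F_t(x) = F(tx)/F(t)`. -/
noncomputable def Ft (F : ℝ → ℝ) (t x : ℝ) : ℝ := F (t * x) / F t

set_option maxHeartbeats 1600000 in
/-- If an Orlicz function `F` with the Δ₂-condition satisfies
`limsup_{t→∞} F_t(x) ≤ C liminf_{t→∞} F_t(x)` for all `0 < x ≤ 1`, then there is
`1 ≤ p < ∞` and a constant `C'` (depending only on `C` and the Δ₂ constant)
such that for every `x₀ ∈ (0,1]` there is `t₀ < ∞` with
`C'⁻¹ x^p ≤ F_t(x) ≤ C' x^p` whenever `t ≥ t₀` and `x₀ ≤ x ≤ 1`. -/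
theorem regular_variation_compactness
    (F : ℝ → ℝ) (hF0 : F 0 = 0)
    (hmono : StrictMonoOn F (Ici 0)) (hcont : ContinuousOn F (Ici 0))
    (hconv : ConvexOn ℝ (Ici 0) F)
    (Δ : ℝ) (hΔ : ∀ x ≥ (0 : ℝ), F (2 * x) ≤ Δ * F x)
    (C : ℝ) (hC : 1 < C)
    (hcmp : ∀ x ∈ Ioc (0 : ℝ) 1,
      limsup (fun t => Ft F t x) atTop ≤ C * liminf (fun t => Ft F t x) atTop) :
    ∃ p : ℝ, 1 ≤ p ∧ ∃ C' > (0 : ℝ), ∀ x₀ ∈ Ioc (0 : ℝ) 1, ∃ t₀ : ℝ,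
      ∀ t ≥ t₀, ∀ x, x₀ ≤ x → x ≤ 1 →
        C'⁻¹ * x ^ p ≤ Ft F t x ∧ Ft F t x ≤ C' * x ^ p := by
  classical
  have hCpos : (0:ℝ) < C := by linarith
  -- basic positivity
  have hFpos : ∀ t : ℝ, 0 < t → 0 < F t := by
    intro t ht
    have := hmono self_mem_Ici (mem_Ici.2 ht.le) ht
    rwa [hF0] at this
  have hFt_pos : ∀ t x : ℝ, 0 < t → 0 < x → 0 < Ft F t x :=
    fun t x ht hx => div_pos (hFpos _ (mul_pos ht hx)) (hFpos t ht)
  have hFt_le_x : ∀ t x : ℝ, 0 < t → 0 < x → x ≤ 1 → Ft F t x ≤ x := by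
    intro t x ht hx hx1
    have h := hconv.2 (mem_Ici.2 ht.le) self_mem_Ici hx.le
      (by linarith : (0:ℝ) ≤ 1 - x) (by ring)
    simp only [smul_eq_mul, mul_zero, add_zero, hF0] at h
    rw [Ft, div_le_iff₀ (hFpos t ht), mul_comm t x]
    linarith
  have hFt_mono : ∀ t : ℝ, 0 < t → ∀ x y : ℝ, 0 < x → x ≤ y → Ft F t x ≤ Ft F t y := by
    intro t ht x y hx hxy
    have hy : 0 < y := hx.trans_le hxy
    have h1 : F (t * x) ≤ F (t * y) :=
      hmono.monotoneOn (mem_Ici.2 (by positivity)) (mem_Ici.2 (by positivity))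
        (mul_le_mul_of_nonneg_left hxy ht.le)
    exact (div_le_div_iff_of_pos_right (hFpos t ht)).2 h1
  -- Delta is at least 2
  have hF1 : 0 < F 1 := hFpos 1 one_pos
  have hΔ2 : 2 ≤ Δ := by
    have hcv := hconv.2 (mem_Ici.2 (by norm_num : (0:ℝ) ≤ 2)) self_mem_Ici
      (by norm_num : (0:ℝ) ≤ 1/2) (by norm_num : (0:ℝ) ≤ 1/2) (by norm_num)
    simp only [smul_eq_mul, mul_zero, add_zero, hF0] at hcv
    norm_num at hcv
    have h2 := hΔ 1 (by norm_num)
    norm_num at h2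
    nlinarith
  have hΔpos : (0:ℝ) < Δ := by linarith
  -- pointwise dyadic lower bound via Δ₂
  have hkey : ∀ (n : ℕ) (t : ℝ), 0 < t → F t ≤ Δ ^ n * F (t * (1/2) ^ n) := by
    intro n
    induction n with
    | zero => intro t ht; simp
    | succ n ih =>
      intro t ht
      have h1 := ih t ht
      have harg : t * (1/2:ℝ) ^ n = 2 * (t * (1/2) ^ (n+1)) := by
        rw [pow_succ]; ring
      have h2 : F (t * (1/2) ^ n) ≤ Δ * F (t * (1/2) ^ (n+1)) := by
        rw [harg]; exact hΔ _ (by positivity)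
      calc F t ≤ Δ ^ n * F (t * (1/2) ^ n) := h1
        _ ≤ Δ ^ n * (Δ * F (t * (1/2) ^ (n+1))) := by
            apply mul_le_mul_of_nonneg_left h2 (by positivity)
        _ = Δ ^ (n+1) * F (t * (1/2) ^ (n+1)) := by rw [pow_succ]; ring
  have hptwise : ∀ (n : ℕ) (t : ℝ), 0 < t → (Δ⁻¹) ^ n ≤ Ft F t ((1/2) ^ n) := by
    intro n t ht
    rw [Ft, le_div_iff₀ (hFpos t ht), inv_pow, inv_mul_le_iff₀ (by positivity)]
    exact hkey n t ht
  -- dyadic limsup / liminf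
  set u : ℕ → ℝ := fun n => limsup (fun t => Ft F t ((1/2) ^ n)) atTop with hu_def
  set l : ℕ → ℝ := fun n => liminf (fun t => Ft F t ((1/2) ^ n)) atTop with hl_def
  have hx2pos : ∀ n : ℕ, (0:ℝ) < (1/2) ^ n := fun n => by positivity
  have hx2le1 : ∀ n : ℕ, ((1/2:ℝ)) ^ n ≤ 1 := fun n => pow_le_one₀ (by norm_num) (by norm_num)
  have hev_ub : ∀ n : ℕ, ∀ᶠ t : ℝ in atTop, Ft F t ((1/2) ^ n) ≤ (1/2) ^ n := by
    intro n
    filter_upwards [eventually_ge_atTop (1:ℝ)] with t ht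
    exact hFt_le_x t _ (lt_of_lt_of_le one_pos ht) (hx2pos n) (hx2le1 n)
  have hev_lb : ∀ n : ℕ, ∀ᶠ t : ℝ in atTop, (Δ⁻¹) ^ n ≤ Ft F t ((1/2) ^ n) := by
    intro n
    filter_upwards [eventually_ge_atTop (1:ℝ)] with t ht
    exact hptwise n t (lt_of_lt_of_le one_pos ht)
  have hb_le : ∀ n : ℕ, IsBoundedUnder (· ≤ ·) atTop (fun t : ℝ => Ft F t ((1/2) ^ n)) :=
    fun n => ⟨(1/2) ^ n, eventually_map.2 (hev_ub n)⟩
  have hb_ge : ∀ n : ℕ, IsBoundedUnder (· ≥ ·) atTop (fun t : ℝ => Ft F t ((1/2) ^ n)) :=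
    fun n => ⟨(Δ⁻¹) ^ n, eventually_map.2 (hev_lb n)⟩
  have hl_le_u : ∀ n : ℕ, l n ≤ u n := fun n => liminf_le_limsup (hb_le n) (hb_ge n)
  have hu_le : ∀ n : ℕ, u n ≤ (1/2) ^ n :=
    fun n => limsup_le_of_le ((hb_ge n).isCoboundedUnder_le) (hev_ub n)
  have hl_ge : ∀ n : ℕ, (Δ⁻¹) ^ n ≤ l n :=
    fun n => le_liminf_of_le ((hb_le n).isCoboundedUnder_ge) (hev_lb n)
  have hl_pos : ∀ n : ℕ, 0 < l n := fun n => lt_of_lt_of_le (by positivity) (hl_ge n)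
  have hu_pos : ∀ n : ℕ, 0 < u n := fun n => lt_of_lt_of_le (hl_pos n) (hl_le_u n)
  have hu_le1 : ∀ n : ℕ, u n ≤ 1 := fun n => (hu_le n).trans (hx2le1 n)
  have hl_le1 : ∀ n : ℕ, l n ≤ 1 := fun n => (hl_le_u n).trans (hu_le1 n)
  have hCul : ∀ n : ℕ, u n ≤ C * l n := fun n => hcmp _ ⟨hx2pos n, hx2le1 n⟩
  have hu0 : u 0 = 1 := by
    have hev : ∀ᶠ t : ℝ in atTop, Ft F t ((1/2:ℝ) ^ 0) = 1 := by
      filter_upwards [eventually_ge_atTop (1:ℝ)] with t ht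
      rw [pow_zero, Ft, mul_one, div_self (hFpos t (lt_of_lt_of_le one_pos ht)).ne']
    show limsup (fun t : ℝ => Ft F t ((1/2:ℝ) ^ 0)) atTop = 1
    rw [limsup_congr hev, limsup_const]
  -- splitting identity
  have hsplit : ∀ (m n : ℕ) (t : ℝ), 0 < t →
      Ft F t ((1/2) ^ (m+n)) = Ft F t ((1/2) ^ m) * Ft F (t * (1/2) ^ m) ((1/2) ^ n) := by
    intro m n t ht
    have h1 : F t ≠ 0 := (hFpos t ht).ne'
    have h2 : F (t * (1/2) ^ m) ≠ 0 := (hFpos _ (by positivity)).ne'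
    rw [Ft, Ft, Ft, pow_add, ← mul_assoc, div_mul_div_comm,
      mul_comm (F t) (F (t * (1/2) ^ m)), mul_div_mul_left _ _ h2]
  have tendm : ∀ m : ℕ, Tendsto (fun t : ℝ => t * (1/2:ℝ) ^ m) atTop atTop :=
    fun m => Tendsto.atTop_mul_const (hx2pos m) tendsto_id
  -- submultiplicativity of u
  have hu_mul : ∀ m n : ℕ, u (m+n) ≤ u m * u n := by
    intro m n
    apply le_of_forall_pos_le_add'
    intro ε hε
    set δ := min (ε/3) 1 with hδdef
    have hδpos : 0 < δ := lt_min (by linarith) one_pos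
    have hδ1 : δ ≤ 1 := min_le_right _ _
    have hδε : 3*δ ≤ ε := by
      have := min_le_left (ε/3) 1; simp only [← hδdef] at this; linarith
    have ev1 : ∀ᶠ t : ℝ in atTop, Ft F t ((1/2)^m) < u m + δ :=
      eventually_lt_of_limsup_lt (show u m < u m + δ by linarith) (hb_le m)
    have ev2 : ∀ᶠ t : ℝ in atTop, Ft F (t * (1/2)^m) ((1/2)^n) < u n + δ :=
      (tendm m).eventually
        (eventually_lt_of_limsup_lt (show u n < u n + δ by linarith) (hb_le n))
    have hle : u (m+n) ≤ (u m + δ) * (u n + δ) := by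
      apply limsup_le_of_le ((hb_ge (m+n)).isCoboundedUnder_le)
      filter_upwards [ev1, ev2, eventually_ge_atTop (1:ℝ)] with t h1 h2 ht
      have ht0 : (0:ℝ) < t := lt_of_lt_of_le one_pos ht
      rw [hsplit m n t ht0]
      have hnn2 : 0 ≤ Ft F (t * (1/2)^m) ((1/2)^n) :=
        (hFt_pos _ _ (by positivity) (hx2pos n)).le
      exact mul_le_mul h1.le h2.le hnn2 (by linarith [hu_pos m])
    calc u (m+n) ≤ (u m + δ) * (u n + δ) := hle
      _ ≤ u m * u n + 3*δ := by nlinarith [hu_le1 m, hu_le1 n, hu_pos m, hu_pos n]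
      _ ≤ u m * u n + ε := by linarith
  -- supermultiplicativity of l
  have hl_mul : ∀ m n : ℕ, l m * l n ≤ l (m+n) := by
    intro m n
    apply le_of_forall_pos_le_add'
    intro ε hε
    set δ := min (ε/2) (min (l m/2) (l n/2)) with hδdef
    have hδpos : 0 < δ :=
      lt_min (by linarith) (lt_min (by linarith [hl_pos m]) (by linarith [hl_pos n]))
    have hδm : δ ≤ l m / 2 := le_trans (min_le_right _ _) (min_le_left _ _)
    have hδn : δ ≤ l n / 2 := le_trans (min_le_right _ _) (min_le_right _ _)
    have hδε : 2*δ ≤ ε := by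
      have := min_le_left (ε/2) (min (l m/2) (l n/2))
      simp only [← hδdef] at this; linarith
    have ev1 : ∀ᶠ t : ℝ in atTop, l m - δ < Ft F t ((1/2)^m) :=
      eventually_lt_of_lt_liminf (show l m - δ < l m by linarith) (hb_ge m)
    have ev2 : ∀ᶠ t : ℝ in atTop, l n - δ < Ft F (t * (1/2)^m) ((1/2)^n) :=
      (tendm m).eventually
        (eventually_lt_of_lt_liminf (show l n - δ < l n by linarith) (hb_ge n))
    have hge : (l m - δ) * (l n - δ) ≤ l (m+n) := by
      apply le_liminf_of_le ((hb_le (m+n)).isCoboundedUnder_ge)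
      filter_upwards [ev1, ev2, eventually_ge_atTop (1:ℝ)] with t h1 h2 ht
      have ht0 : (0:ℝ) < t := lt_of_lt_of_le one_pos ht
      rw [hsplit m n t ht0]
      exact mul_le_mul h1.le h2.le (by linarith [hl_pos n])
        ((hFt_pos t _ ht0 (hx2pos m)).le)
    nlinarith [hl_le1 m, hl_le1 n, hl_pos m, hl_pos n]
  -- Fekete machinery
  have hlogC : (0:ℝ) < Real.log C := Real.log_pos hC
  set h : ℕ → ℝ := fun n => -Real.log (u n) with hh_def
  have hsuper : ∀ m n : ℕ, h m + h n ≤ h (m+n) := by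
    intro m n
    have hlm : Real.log (u (m+n)) ≤ Real.log (u m) + Real.log (u n) := by
      rw [← Real.log_mul (hu_pos m).ne' (hu_pos n).ne']
      exact Real.log_le_log (hu_pos (m+n)) (hu_mul m n)
    simp only [hh_def]; linarith
  have hsub : ∀ m n : ℕ, h (m+n) ≤ h m + h n + 2*Real.log C := by
    intro m n
    have h1 : u m / C ≤ l m := by rw [div_le_iff₀ hCpos]; linarith [hCul m]
    have h2 : u n / C ≤ l n := by rw [div_le_iff₀ hCpos]; linarith [hCul n]
    have key : u m * u n / C^2 ≤ u (m+n) :=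
      calc u m * u n / C^2 = (u m / C) * (u n / C) := by ring
        _ ≤ l m * l n := by
            apply mul_le_mul h1 h2 (div_nonneg (hu_pos n).le hCpos.le) (hl_pos m).le
        _ ≤ l (m+n) := hl_mul m n
        _ ≤ u (m+n) := hl_le_u (m+n)
    have hlog := Real.log_le_log (div_pos (mul_pos (hu_pos m) (hu_pos n)) (by positivity)) key
    rw [Real.log_div (mul_pos (hu_pos m) (hu_pos n)).ne' (by positivity),
      Real.log_mul (hu_pos m).ne' (hu_pos n).ne', Real.log_pow] at hlog
    simp only [hh_def]
    push_cast at hlog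
    linarith
  have hub : ∀ n : ℕ, h n ≤ (n:ℝ) * Real.log Δ := by
    intro n
    have h1 : Real.log ((Δ⁻¹)^n) ≤ Real.log (u n) :=
      Real.log_le_log (by positivity) ((hl_ge n).trans (hl_le_u n))
    rw [Real.log_pow, Real.log_inv] at h1
    simp only [hh_def]
    push_cast at h1 ⊢
    linarith
  obtain ⟨lam, hlam1, hup, hlo⟩ := fekete_bound h (2*Real.log C) (Real.log Δ)
    (by linarith) (by simp [hh_def, hu0]) hsuper hsub hub
  have hlam_lb : Real.log 2 ≤ lam := by
    have h1 : Real.log (u 1) ≤ Real.log (1/2) :=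
      Real.log_le_log (hu_pos 1) (by simpa using hu_le 1)
    have h2 : Real.log (1/2:ℝ) = -Real.log 2 := by rw [one_div, Real.log_inv]
    have h3 : Real.log 2 ≤ h 1 := by simp only [hh_def]; linarith
    linarith
  have hlog2 : (0:ℝ) < Real.log 2 := Real.log_pos one_lt_two
  set p := lam / Real.log 2 with hp_def
  have hp1 : 1 ≤ p := (one_le_div hlog2).2 hlam_lb
  have hplam : p * Real.log 2 = lam := div_mul_cancel₀ lam hlog2.ne'
  have hdy : ∀ n : ℕ, ((1/2:ℝ)^n) ^ p = Real.exp (-(lam * n)) := by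
    intro n
    rw [← Real.rpow_natCast (1/2:ℝ) n, ← Real.rpow_mul (by norm_num : (0:ℝ) ≤ 1/2),
      Real.rpow_def_of_pos (by norm_num : (0:ℝ) < 1/2)]
    congr 1
    rw [show Real.log (1/2:ℝ) = -Real.log 2 by rw [one_div, Real.log_inv]]
    linear_combination (-(n:ℝ)) * hplam
  have hu_ub : ∀ n : ℕ, u n ≤ C^2 * Real.exp (-(lam*n)) := by
    intro n
    have h1 := hlo n
    have h2 : Real.log (u n) ≤ 2*Real.log C - lam * n := by
      simp only [hh_def] at h1; linarith
    calc u n = Real.exp (Real.log (u n)) := (Real.exp_log (hu_pos n)).symm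
      _ ≤ Real.exp (2*Real.log C - lam*n) := Real.exp_le_exp.2 h2
      _ = C^2 * Real.exp (-(lam*n)) := by
          rw [show 2*Real.log C - lam*(n:ℝ) = Real.log (C^2) + (-(lam*n)) by
            rw [Real.log_pow]; push_cast; ring, Real.exp_add, Real.exp_log (by positivity)]
  have hu_lb : ∀ n : ℕ, Real.exp (-(lam*n)) ≤ u n := by
    intro n
    have h1 := hup n
    have h2 : -(lam*(n:ℝ)) ≤ Real.log (u n) := by
      simp only [hh_def] at h1; linarith
    calc Real.exp (-(lam*n)) ≤ Real.exp (Real.log (u n)) := Real.exp_le_exp.2 h2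
      _ = u n := Real.exp_log (hu_pos n)
  have hl_lb : ∀ n : ℕ, Real.exp (-(lam*n)) / C ≤ l n := by
    intro n
    rw [div_le_iff₀ hCpos]
    calc Real.exp (-(lam*n)) ≤ u n := hu_lb n
      _ ≤ C * l n := hCul n
      _ = l n * C := mul_comm _ _
  -- the constant
  set a := (2:ℝ)^p with ha_def
  have ha_pos : (0:ℝ) < a := Real.rpow_pos_of_pos two_pos p
  have h2p1 : (2:ℝ)^(p+1) = 2 * a := by
    rw [ha_def, Real.rpow_add two_pos, Real.rpow_one]; ring
  refine ⟨p, hp1, (2:ℝ)^(p+1) * C^2, by positivity, ?_⟩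
  intro x₀ hx₀
  obtain ⟨hx₀pos, hx₀1⟩ := hx₀
  obtain ⟨N, hN⟩ := exists_pow_lt_of_lt_one hx₀pos (by norm_num : (1/2:ℝ) < 1)
  have hev : ∀ᶠ t : ℝ in atTop, 1 ≤ t ∧ ∀ i ∈ Finset.range (N+2),
      Ft F t ((1/2)^i) < 2 * u i ∧ l i / 2 < Ft F t ((1/2)^i) := by
    refine (eventually_ge_atTop (1:ℝ)).and ?_
    rw [eventually_all_finset]
    intro i _
    exact (eventually_lt_of_limsup_lt (show u i < 2*u i by linarith [hu_pos i]) (hb_le i)).and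
      (eventually_lt_of_lt_liminf (show l i/2 < l i by linarith [hl_pos i]) (hb_ge i))
  obtain ⟨t₀, ht₀⟩ := eventually_atTop.1 hev
  refine ⟨t₀, ?_⟩
  intro t ht x hx₀x hx1
  obtain ⟨ht1, hbounds⟩ := ht₀ t ht
  have ht0 : (0:ℝ) < t := lt_of_lt_of_le one_pos ht1
  have hxpos : 0 < x := hx₀pos.trans_le hx₀x
  set i := Nat.findGreatest (fun j => x ≤ (1/2:ℝ)^j) N with hi_def
  have hiN : i ≤ N := Nat.findGreatest_le N
  have hPi : x ≤ (1/2:ℝ)^i := Nat.findGreatest_spec (P := fun j => x ≤ (1/2:ℝ)^j) (Nat.zero_le N) (by simpa using hx1)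
  have hlt : (1/2:ℝ)^(i+1) < x := by
    rcases eq_or_lt_of_le hiN with heq | hlt'
    · have h1 : (1/2:ℝ)^(i+1) ≤ (1/2)^N :=
        pow_le_pow_of_le_one (by norm_num) (by norm_num) (by omega)
      linarith
    · have hnot := Nat.findGreatest_is_greatest (Nat.lt_succ_self i) (by omega : i+1 ≤ N)
      exact not_le.1 hnot
  have hbi := hbounds i (Finset.mem_range.2 (by omega))
  have hbi1 := hbounds (i+1) (Finset.mem_range.2 (by omega))
  clear hi_def
  clear_value i
  have hrx_ub : x ^ p ≤ ((1/2:ℝ)^i) ^ p :=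
    Real.rpow_le_rpow hxpos.le hPi (by linarith)
  have hrx_lb : ((1/2:ℝ)^(i+1)) ^ p ≤ x ^ p :=
    Real.rpow_le_rpow (by positivity) hlt.le (by linarith)
  have hstep : ((1/2:ℝ)^i) ^ p = a * ((1/2:ℝ)^(i+1)) ^ p := by
    rw [hdy i, hdy (i+1), ha_def, Real.rpow_def_of_pos two_pos, ← Real.exp_add]
    congr 1
    push_cast
    linear_combination (-1:ℝ) * hplam
  have hEpos : (0:ℝ) < ((1/2:ℝ)^(i+1)) ^ p := by positivity
  have hxp_pos : (0:ℝ) < x ^ p := by positivity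
  constructor
  · -- lower bound
    have hmono1 : Ft F t ((1/2)^(i+1)) ≤ Ft F t x := hFt_mono t ht0 _ x (by positivity) hlt.le
    have h1 : l (i+1) / 2 < Ft F t ((1/2)^(i+1)) := hbi1.2
    have h2 : ((1/2:ℝ)^(i+1)) ^ p / C ≤ l (i+1) := by
      have hthis := hl_lb (i+1)
      rw [← hdy (i+1)] at hthis
      exact hthis
    have h3 : x ^ p ≤ a * ((1/2:ℝ)^(i+1)) ^ p := hstep ▸ hrx_ub
    have target : ((2:ℝ)^(p+1) * C^2)⁻¹ * x ^ p ≤ l (i+1) / 2 := by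
      rw [h2p1]
      have e1 : ((2*a)*C^2)⁻¹ * x^p ≤ ((2*a)*C^2)⁻¹ * (a * ((1/2:ℝ)^(i+1)) ^ p) :=
        mul_le_mul_of_nonneg_left h3 (by positivity)
      have e2 : ((2*a)*C^2)⁻¹ * (a * ((1/2:ℝ)^(i+1)) ^ p)
          = ((1/2:ℝ)^(i+1)) ^ p / (2*C^2) := by
        field_simp
      have e3 : ((1/2:ℝ)^(i+1)) ^ p / (2*C^2) ≤ (((1/2:ℝ)^(i+1)) ^ p / C) / 2 := by
        rw [div_div]
        apply div_le_div_of_nonneg_left hEpos.le (by positivity)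
        nlinarith
      have e4 : (((1/2:ℝ)^(i+1)) ^ p / C) / 2 ≤ l (i+1) / 2 := by linarith
      linarith [e1, e2 ▸ e1]
    calc ((2:ℝ)^(p+1) * C^2)⁻¹ * x ^ p ≤ l (i+1) / 2 := target
      _ ≤ Ft F t ((1/2)^(i+1)) := h1.le
      _ ≤ Ft F t x := hmono1
  · -- upper bound
    have hmono2 : Ft F t x ≤ Ft F t ((1/2)^i) := hFt_mono t ht0 x _ hxpos hPi
    have h1 : Ft F t ((1/2)^i) < 2*u i := hbi.1
    have h2 : u i ≤ C^2 * ((1/2:ℝ)^i) ^ p := by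
      have hthis := hu_ub i
      rw [← hdy i] at hthis
      exact hthis
    have h4 : ((1/2:ℝ)^i)^p ≤ a * x^p := by
      rw [hstep]
      exact mul_le_mul_of_nonneg_left hrx_lb ha_pos.le
    have h5 : u i ≤ C^2 * (a * x^p) := by nlinarith
    calc Ft F t x ≤ Ft F t ((1/2)^i) := hmono2
      _ ≤ 2 * u i := h1.le
      _ ≤ 2 * (C^2 * (a * x^p)) := by linarith
      _ = (2:ℝ)^(p+1) * C^2 * x^p := by rw [h2p1]; ring
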